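/- For any r ≥ 3 and any connected r-regular graph G, λ(G) ≥ (r-2)·φ(G) + 2, where λ(G) is the maximum number of leaves and φ(G) the maximum number of full degree vertices over all spanning trees of G. -/

import Mathlib

open SimpleGraph

/-- Degree of `v` in `T` (as `Set.ncard` of the neighbor set). -/
noncomputable def deg {V : Type*} (T : SimpleGraph V) (v : V) : ℕ :=
  (T.neighborSet v).ncard

/-- `T` is a spanning tree of `G`. -/
def IsSpanningTree {V : Type*} (G T : SimpleGraph V) : Prop :=
  T ≤ G ∧ T.IsTree

/-- Number of full degree vertices of the spanning tree `T` of `G`. -/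
noncomputable def fullDegCount {V : Type*} (G T : SimpleGraph V) : ℕ :=
  {v : V | deg T v = deg G v}.ncard

/-- Number of leaves of `T`. -/
noncomputable def leafCount {V : Type*} (T : SimpleGraph V) : ℕ :=
  {v : V | deg T v = 1}.ncard

/-- `φ(G)`: maximum number of full degree vertices over all spanning trees. -/
noncomputable def phi {V : Type*} (G : SimpleGraph V) : ℕ :=
  sSup {k | ∃ T : SimpleGraph V, IsSpanningTree G T ∧ fullDegCount G T = k}

/-- `λ(G)`: maximum number of leaves over all spanning trees. -/
noncomputable def lam {V : Type*} (G : SimpleGraph V) : ℕ :=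
  sSup {k | ∃ T : SimpleGraph V, IsSpanningTree G T ∧ leafCount T = k}

/-- `S` is a connected dominating set of `G`. -/
def IsConnDomSet {V : Type*} (G : SimpleGraph V) (S : Set V) : Prop :=
  (G.induce S).Connected ∧ ∀ v : V, v ∈ S ∨ ∃ u ∈ S, G.Adj u v

/-- `γ_C(G)`: minimum size of a connected dominating set. -/
noncomputable def gammaC {V : Type*} (G : SimpleGraph V) : ℕ :=
  sInf {k | ∃ S : Set V, IsConnDomSet G S ∧ S.ncard = k}

/-- Closed neighborhood of `v` in `G`. -/
def closedNbhd {V : Type*} (G : SimpleGraph V) (v : V) : Set V :=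
  insert v (G.neighborSet v)

/-- The square of a graph: join vertices at distance at most 2. -/
def square {V : Type*} (G : SimpleGraph V) : SimpleGraph V where
  Adj u v := u ≠ v ∧ G.Reachable u v ∧ G.dist u v ≤ 2
  symm := by
    constructor
    rintro u v ⟨h1, h2, h3⟩
    exact ⟨h1.symm, h2.symm, by rwa [SimpleGraph.dist_comm]⟩
  loopless := by constructor; rintro v ⟨h, -⟩; exact h rfl

attribute [local instance] Classical.propDecidable


lemma deg_eq_degree {V : Type*} [Fintype V] (T : SimpleGraph V) (v : V) :
    deg T v = T.degree v := by
  simp [deg, degree, neighborFinset_def, Set.ncard_eq_toFinset_card']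

lemma conn_delete {V : Type*} {H : SimpleGraph V} (hc : H.Connected) {v w : V}
    (hreach : (H \ fromEdgeSet {s(v,w)}).Reachable v w) :
    (H \ fromEdgeSet {s(v,w)}).Connected := by
  have key : ∀ a b : V, H.Walk a b → (H \ fromEdgeSet {s(v,w)}).Reachable a b := by
    intro a b p
    induction p with
    | nil => exact Reachable.refl _
    | @cons x y z h p ih =>
      by_cases he : s(x, y) = s(v, w)
      · rw [Sym2.eq_iff] at he
        rcases he with ⟨rfl, rfl⟩ | ⟨rfl, rfl⟩
        · exact hreach.trans ih
        · exact hreach.symm.trans ih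
      · refine (Adj.reachable ?_).trans ih
        refine ⟨h, ?_⟩
        simp only [fromEdgeSet_adj, Set.mem_singleton_iff]
        tauto
  rw [connected_iff]
  exact ⟨fun a b => key a b (hc.preconnected a b).some, hc.nonempty⟩

lemma exists_st_aux {V : Type*} [Fintype V] :
    ∀ n (G : SimpleGraph V), G.edgeSet.ncard = n → G.Connected →
      ∃ T, T ≤ G ∧ T.IsTree := by
  intro n
  induction n using Nat.strong_induction_on with
  | _ n ih =>
    intro G hn hG
    by_cases ha : G.IsAcyclic
    · exact ⟨G, le_refl G, ⟨hG, ha⟩⟩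
    · rw [isAcyclic_iff_forall_adj_isBridge] at ha
      push_neg at ha
      obtain ⟨v, w, hvw, hnb⟩ := ha
      rw [isBridge_iff] at hnb
      have hreach : (G \ fromEdgeSet {s(v,w)}).Reachable v w := by
        by_contra hr; exact hnb hr
      have hconn' := conn_delete hG hreach
      have hsub : (G \ fromEdgeSet {s(v,w)}).edgeSet ⊆ G.edgeSet := by
        apply edgeSet_mono; exact sdiff_le
      have hmem : s(v,w) ∈ G.edgeSet := hvw
      have hnmem : s(v,w) ∉ (G \ fromEdgeSet {s(v,w)}).edgeSet := by
        simp [edgeSet_sdiff]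
      have hlt : (G \ fromEdgeSet {s(v,w)}).edgeSet.ncard < n := by
        rw [← hn]
        exact Set.ncard_lt_ncard (Set.ssubset_iff_of_subset hsub |>.2 ⟨_, hmem, hnmem⟩)
          (Set.toFinite _)
      obtain ⟨T, hT1, hT2⟩ := ih _ hlt _ rfl hconn'
      exact ⟨T, hT1.trans sdiff_le, hT2⟩

lemma exists_spanning_tree {V : Type*} [Fintype V] (G : SimpleGraph V) (hG : G.Connected) :
    ∃ T, IsSpanningTree G T := by
  obtain ⟨T, h1, h2⟩ := exists_st_aux _ G rfl hG
  exact ⟨T, h1, h2⟩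

lemma tree_deg_pos {V : Type*} [Fintype V] {T : SimpleGraph V} (hT : T.IsTree)
    (hcard : 2 ≤ Fintype.card V) (v : V) : 1 ≤ deg T v := by
  rw [deg_eq_degree]
  obtain ⟨u, hu⟩ := Fintype.exists_ne_of_one_lt_card hcard v
  obtain ⟨p⟩ := hT.isConnected.preconnected v u
  have hnp : ¬ p.Nil := SimpleGraph.Walk.not_nil_of_ne (Ne.symm hu)
  rw [Nat.one_le_iff_ne_zero, ← Nat.pos_iff_ne_zero, degree_pos_iff_exists_adj]
  exact ⟨p.getVert 1, SimpleGraph.Walk.adj_snd hnp⟩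

lemma tree_leaf_bound {V : Type*} [Fintype V] (T : SimpleGraph V) (hT : T.IsTree)
    (hcard : 2 ≤ Fintype.card V) (r : ℕ) (hr : 3 ≤ r) :
    (r - 2) * (Finset.univ.filter (fun v => deg T v = r)).card + 2 ≤
      (Finset.univ.filter (fun v => deg T v = 1)).card := by
  classical
  set n := Fintype.card V with hn
  set F := Finset.univ.filter (fun v => deg T v = r) with hF
  set L := Finset.univ.filter (fun v => deg T v = 1) with hL
  have hsum : ∑ v, deg T v = 2 * (n - 1) := by
    simp only [deg_eq_degree]
    rw [sum_degrees_eq_twice_card_edges]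
    have h := hT.card_edgeFinset
    omega
  have hdisj : Disjoint L F := by
    rw [Finset.disjoint_filter]
    intro v _ h1 h2
    omega
  have hsplit : ∑ v ∈ Finset.univ \ (L ∪ F), deg T v + ∑ v ∈ (L ∪ F), deg T v
      = ∑ v, deg T v := Finset.sum_sdiff (Finset.subset_univ _)
  have hLF : ∑ v ∈ (L ∪ F), deg T v = ∑ v ∈ L, deg T v + ∑ v ∈ F, deg T v :=
    Finset.sum_union hdisj
  have hLsum : ∑ v ∈ L, deg T v = L.card := by
    rw [Finset.sum_congr rfl (fun v hv => (Finset.mem_filter.1 hv).2)]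
    simp
    rfl
  have hFsum : ∑ v ∈ F, deg T v = F.card * r := by
    rw [Finset.sum_congr rfl (fun v hv => (Finset.mem_filter.1 hv).2)]
    simp [Finset.sum_const, mul_comm]
    exact Or.inl rfl
  have hrest : 2 * (Finset.univ \ (L ∪ F)).card ≤ ∑ v ∈ Finset.univ \ (L ∪ F), deg T v := by
    calc 2 * (Finset.univ \ (L ∪ F)).card = ∑ _v ∈ Finset.univ \ (L ∪ F), 2 := by
          rw [Finset.sum_const, smul_eq_mul, mul_comm]
      _ ≤ ∑ v ∈ Finset.univ \ (L ∪ F), deg T v := by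
          apply Finset.sum_le_sum
          intro v hv
          have h1 := tree_deg_pos hT hcard v
          have h2 : deg T v ≠ 1 := by
            intro h
            apply (Finset.mem_sdiff.1 hv).2
            exact Finset.mem_union_left _ (Finset.mem_filter.2 ⟨Finset.mem_univ _, h⟩)
          omega
  have hcard_rest : (Finset.univ \ (L ∪ F)).card = n - (L.card + F.card) := by
    rw [Finset.card_sdiff_of_subset (Finset.subset_univ _), Finset.card_union_of_disjoint hdisj,
      Finset.card_univ]
  have hle : L.card + F.card ≤ n := by
    rw [← Finset.card_union_of_disjoint hdisj]
    exact (Finset.card_le_univ _).trans_eq Finset.card_univ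
  have h1 : (r - 2) * F.card + 2 * F.card = F.card * r := by
    rw [← add_mul]
    have : r - 2 + 2 = r := by omega
    rw [this, mul_comm]
  omega

theorem stmt10 {V : Type*} [Fintype V] (G : SimpleGraph V) (r : ℕ)
    (hr : 3 ≤ r) (hG : G.Connected) (hreg : ∀ v : V, deg G v = r) :
    (r - 2) * phi G + 2 ≤ lam G := by
  classical
  have hne : {k | ∃ T : SimpleGraph V, IsSpanningTree G T ∧ fullDegCount G T = k}.Nonempty := by
    obtain ⟨T, hT⟩ := exists_spanning_tree G hG
    exact ⟨_, T, hT, rfl⟩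
  have hbdd : BddAbove {k | ∃ T : SimpleGraph V, IsSpanningTree G T ∧ fullDegCount G T = k} := by
    refine ⟨Fintype.card V, ?_⟩
    rintro k ⟨T, hT, rfl⟩
    exact (Set.ncard_le_ncard (Set.subset_univ _) Set.finite_univ).trans_eq
      (by rw [Set.ncard_univ, Nat.card_eq_fintype_card])
  obtain ⟨T, hT, hTphi⟩ := Nat.sSup_mem hne hbdd
  obtain ⟨v⟩ := hG.nonempty
  have hcard : 2 ≤ Fintype.card V := by
    have h := hreg v
    rw [deg_eq_degree] at h
    have h2 := G.degree_lt_card_verts v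
    omega
  have key := tree_leaf_bound T hT.2 hcard r hr
  have hFcount : fullDegCount G T = (Finset.univ.filter (fun v => deg T v = r)).card := by
    rw [fullDegCount, Set.ncard_eq_toFinset_card', Set.toFinset_setOf]
    congr 1
    ext w
    simp [hreg w]
  have hLcount : leafCount T = (Finset.univ.filter (fun v => deg T v = 1)).card := by
    rw [leafCount, Set.ncard_eq_toFinset_card', Set.toFinset_setOf]
  have hbddL : BddAbove {k | ∃ T : SimpleGraph V, IsSpanningTree G T ∧ leafCount T = k} := by
    refine ⟨Fintype.card V, ?_⟩
    rintro k ⟨T', hT', rfl⟩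
    exact (Set.ncard_le_ncard (Set.subset_univ _) Set.finite_univ).trans_eq
      (by rw [Set.ncard_univ, Nat.card_eq_fintype_card])
  calc (r - 2) * phi G + 2 = (r - 2) * fullDegCount G T + 2 := by rw [hTphi]; rfl
    _ ≤ leafCount T := by rw [hFcount, hLcount]; exact key
    _ ≤ lam G := le_csSup hbddL ⟨T, hT, rfl⟩
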